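/- Let H be a modular hyperplane of a matroid M with complementary cocircuit C* = E(M)−H, let (F_1,F_2) be a vertical cover of M|H, and let P be the union of projections P_H(x,y) over all distinct rank-one flats x, y contained in C*. Then P ⊆ F_i for some i ∈ {1,2}, and (F_i ∪ C*, F_{3−i}) is a vertical cover of M. Moreover, if (F_1,F_2) is a modular cover of M|H, then (F_i ∪ C*, F_{3−i}) is a modular cover of M. -/

import Mathlib

open Set

namespace Matroid

variable {α : Type*} {β : Type*}

/-- The rank of a set in a matroid: the supremum of sizes of independent subsets. -/
noncomputable def mRank (M : Matroid α) (X : Set α) : ℕ :=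
  sSup {n : ℕ | ∃ I, M.Indep I ∧ I ⊆ X ∧ I.ncard = n}

/-- The rank of a matroid. -/
noncomputable def mRk (M : Matroid α) : ℕ := M.mRank M.E

/-- A flat `F` is modular if `r F + r F' = r (F ∪ F') + r (F ∩ F')` for every flat `F'`. -/
def IsModularFlat (M : Matroid α) (F : Set α) : Prop :=
  M.IsFlat F ∧ ∀ F', M.IsFlat F' →
    M.mRank F + M.mRank F' = M.mRank (F ∪ F') + M.mRank (F ∩ F')

/-- A proper flat is a flat other than the ground set. -/
def IsProperFlat (M : Matroid α) (F : Set α) : Prop := M.IsFlat F ∧ F ≠ M.E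

/-- A vertical cover is a pair of proper flats whose union is the ground set. -/
def VerticalCover (M : Matroid α) (F F' : Set α) : Prop :=
  M.IsProperFlat F ∧ M.IsProperFlat F' ∧ F ∪ F' = M.E

/-- A modular cover is a vertical cover by two modular flats. -/
def ModularCover (M : Matroid α) (F F' : Set α) : Prop :=
  M.VerticalCover F F' ∧ M.IsModularFlat F ∧ M.IsModularFlat F'

/-- A matroid is round if it has no vertical cover. -/
def Round (M : Matroid α) : Prop := ∀ F F', ¬ M.VerticalCover F F'

/-- A subset of the ground set is round if the restriction to it is round. -/
def RoundSet (M : Matroid α) (X : Set α) : Prop := X ⊆ M.E ∧ (M ↾ X).Round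

/-- A rotunda is a maximal round flat. -/
def Rotunda (M : Matroid α) (R : Set α) : Prop :=
  M.IsFlat R ∧ M.RoundSet R ∧ ∀ R', M.IsFlat R' → M.RoundSet R' → R ⊆ R' → R' = R

/-- A matroid of rank `r` is supersolvable if there is a chain of modular flats
`F 0 ⊆ F 1 ⊆ ⋯ ⊆ F r` with `r (F i) = i` for each `i`. -/
def Supersolvable (M : Matroid α) : Prop :=
  ∃ F : ℕ → Set α, (∀ i ≤ M.mRk, M.IsModularFlat (F i) ∧ M.mRank (F i) = i) ∧
    ∀ i < M.mRk, F i ⊆ F (i + 1)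

/-- A matroid is saturated if every round flat is modular. -/
def Saturated (M : Matroid α) : Prop :=
  ∀ F, M.IsFlat F → M.RoundSet F → M.IsModularFlat F

/-- A circuit: a minimal dependent subset of the ground set. -/
def Circ (M : Matroid α) (C : Set α) : Prop :=
  C ⊆ M.E ∧ ¬ M.Indep C ∧ ∀ D ⊂ C, M.Indep D

/-- A matroid is connected if it is non-empty and every two distinct elements lie in a
common circuit. -/
def ConnectedM (M : Matroid α) : Prop :=
  M.E.Nonempty ∧ ∀ x ∈ M.E, ∀ y ∈ M.E, x = y ∨ ∃ C, M.Circ C ∧ x ∈ C ∧ y ∈ C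

/-- A hyperplane: a flat of rank `r M - 1`. -/
def IsHyperplane (M : Matroid α) (H : Set α) : Prop :=
  M.IsFlat H ∧ M.mRank H + 1 = M.mRk

/-- The union of the projections `P_H(x, y) = H ∩ cl (x ∪ y)` onto the modular hyperplane `H`,
taken over all pairs of distinct rank-one flats `x = cl {a}`, `y = cl {b}` spanned by
elements `a, b` of `X`. -/
def projUnion (M : Matroid α) (H X : Set α) : Set α :=
  ⋃ a ∈ X, ⋃ b ∈ X, ⋃ (_ : M.closure {a} ≠ M.closure {b}), H ∩ M.closure {a, b}

/-- Two elements are related if they are equal or lie in a common circuit; the connected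
components of a matroid are the restrictions to the equivalence classes of this relation. -/
def connRel (M : Matroid α) (x y : α) : Prop :=
  x = y ∨ ∃ C, M.Circ C ∧ x ∈ C ∧ y ∈ C

/-- The rotunda graph of a matroid: vertices are the rotunda; two rotunda are adjacent if
they intersect and there is a modular cover separating them at their intersection. -/
def rotundaGraph (M : Matroid α) : SimpleGraph {R : Set α // M.Rotunda R} where
  Adj R₁ R₂ := R₁ ≠ R₂ ∧ (R₁.1 ∩ R₂.1).Nonempty ∧
    ∃ F₁ F₂, M.ModularCover F₁ F₂ ∧ R₁.1 ⊆ F₁ ∧ R₂.1 ⊆ F₂ ∧ F₁ ∩ F₂ = R₁.1 ∩ R₂.1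
  symm := ⟨by
    rintro a b ⟨hne, hint, F₁, F₂, ⟨⟨hp1, hp2, hu⟩, hm1, hm2⟩, h1, h2, hi⟩
    refine ⟨hne.symm, by rwa [Set.inter_comm], F₂, F₁,
      ⟨⟨hp2, hp1, by rwa [Set.union_comm]⟩, hm2, hm1⟩, h2, h1, ?_⟩
    rw [Set.inter_comm, hi, Set.inter_comm]⟩
  loopless := ⟨fun a h => h.1 rfl⟩

/-- A rotunda tree of `M`: a tree on the rotunda of `M` such that for each element `x` of the
ground set, the rotunda containing `x` induce a (nonempty) subtree. -/
def IsRotundaTree (M : Matroid α) (T : SimpleGraph {R : Set α // M.Rotunda R}) : Prop :=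
  T.IsTree ∧ ∀ x ∈ M.E, (T.induce {t : {R : Set α // M.Rotunda R} | x ∈ t.1}).Connected

/-- A legitimate weighting of `M`: zero on the empty set, and strictly monotone under proper
inclusion on the set consisting of `∅` and the pairwise intersections of distinct rotunda. -/
def LegitimateWeighting (M : Matroid α) (σ : Set α → ℕ) : Prop :=
  σ ∅ = 0 ∧
  ∀ X X' : Set α,
    (X = ∅ ∨ ∃ R R', M.Rotunda R ∧ M.Rotunda R' ∧ R ≠ R' ∧ X = R ∩ R') →
    (X' = ∅ ∨ ∃ R R', M.Rotunda R ∧ M.Rotunda R' ∧ R ≠ R' ∧ X' = R ∩ R') →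
    X ⊂ X' → σ X < σ X'

/-- The total weight of a graph on the rotunda of `M`, where the edge joining rotunda
`R` and `R'` gets weight `σ (R ∩ R')`. -/
noncomputable def treeWeight {M : Matroid α} (σ : Set α → ℕ)
    (T : SimpleGraph {R : Set α // M.Rotunda R}) : ℕ :=
  ∑ᶠ e ∈ T.edgeSet,
    Sym2.lift ⟨fun a b => σ (a.1 ∩ b.1), fun a b => by simp [Set.inter_comm]⟩ e

/-- A tree-decomposition of a matroid: a tree together with bags covering the ground set. -/
def IsTreeDecomp (M : Matroid α) (T : SimpleGraph β) (τ : β → Set α) : Prop :=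
  T.IsTree ∧ ∀ x ∈ M.E, ∃ t, x ∈ τ t

/-- The node-width of a node `t` in a tree-decomposition `(T, τ)` of `M`:
`(Σ_i r (τ t ∪ ⋃_{k ≠ i} F_k)) − (d − 1) · r M`, where `F_1, …, F_d` are the unions of the
bags over the connected components of `T − t`. -/
noncomputable def nodeWidth (M : Matroid α) (T : SimpleGraph β) (τ : β → Set α) (t : β) : ℤ :=
  (∑ᶠ c : (T.induce {s : β | s ≠ t}).ConnectedComponent,
      (M.mRank (τ t ∪ ⋃ (s : {s : β // s ≠ t})
        (_ : (T.induce {s : β | s ≠ t}).connectedComponentMk s ≠ c), τ s.1) : ℤ))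
    - ((Nat.card (T.induce {s : β | s ≠ t}).ConnectedComponent : ℤ) - 1) * (M.mRk : ℤ)

/-- The width of a tree-decomposition: the maximum node-width. -/
noncomputable def decompWidth (M : Matroid α) (T : SimpleGraph β) (τ : β → Set α) : ℤ :=
  sSup (Set.range (M.nodeWidth T τ))

/-- The tree-width of a matroid: the minimum width of a (finite) tree-decomposition. -/
noncomputable def treeWidth (M : Matroid α) : ℕ :=
  sInf {n : ℕ | ∃ (β : Type) (T : SimpleGraph β) (τ : β → Set α),
    Finite β ∧ M.IsTreeDecomp T τ ∧ ∀ t, M.nodeWidth T τ t ≤ (n : ℤ)}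

end Matroid

namespace SimpleGraph

/-- A graph is chordal if every cycle with at least four edges has a chord: an edge of the
graph joining two vertices of the cycle that is not an edge of the cycle. -/
def IsChordal {V : Type*} (G : SimpleGraph V) : Prop :=
  ∀ ⦃v : V⦄ (w : G.Walk v v), w.IsCycle → 4 ≤ w.length →
    ∃ x y, x ∈ w.support ∧ y ∈ w.support ∧ G.Adj x y ∧ s(x, y) ∉ w.edges

/-- A maximal clique of a graph. -/
def MaxClique {V : Type*} (G : SimpleGraph V) (C : Set V) : Prop :=
  G.IsClique C ∧ ∀ D, G.IsClique D → C ⊆ D → D = C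

/-- The reduced clique graph of a graph: vertices are the maximal cliques; two maximal
cliques are adjacent if they intersect and every walk from one side to the other passes
through their intersection. -/
def reducedCliqueGraph {V : Type*} (G : SimpleGraph V) :
    SimpleGraph {C : Set V // G.MaxClique C} where
  Adj C₁ C₂ := C₁ ≠ C₂ ∧ (C₁.1 ∩ C₂.1).Nonempty ∧
    ∀ u ∈ C₁.1 \ C₂.1, ∀ v ∈ C₂.1 \ C₁.1, ∀ p : G.Walk u v,
      ∃ z ∈ p.support, z ∈ C₁.1 ∩ C₂.1
  symm := ⟨by
    rintro a b ⟨hne, hint, hsep⟩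
    refine ⟨hne.symm, by rwa [Set.inter_comm], fun u hu v hv p => ?_⟩
    obtain ⟨z, hz, hz2⟩ := hsep v hv u hu p.reverse
    refine ⟨z, ?_, by rwa [Set.inter_comm]⟩
    simpa [SimpleGraph.Walk.support_reverse] using hz⟩
  loopless := ⟨fun a h => h.1 rfl⟩

end SimpleGraph

open Matroid


namespace Matroid

section AuxLemmas

variable {α : Type*} {M : Matroid α} {X Y I J F F' F₁ F₂ G H : Set α} {a b c d e x y : α}

lemma le_mRank [M.Finite] (hI : M.Indep I) (hIX : I ⊆ X) : I.ncard ≤ M.mRank X := by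
  have hbdd : BddAbove {n : ℕ | ∃ I, M.Indep I ∧ I ⊆ X ∧ I.ncard = n} := by
    refine ⟨M.E.ncard, ?_⟩
    rintro n ⟨J, hJ, hJX, rfl⟩
    exact Set.ncard_le_ncard hJ.subset_ground M.ground_finite
  exact le_csSup hbdd ⟨I, hI, hIX, rfl⟩

lemma IsBasis'.mRank_eq [M.Finite] (hI : M.IsBasis' I X) : M.mRank X = I.ncard := by
  refine le_antisymm (csSup_le ⟨0, ∅, M.empty_indep, empty_subset _, by simp⟩ ?_)
    (le_mRank hI.indep hI.subset)
  rintro n ⟨J, hJ, hJX, rfl⟩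
  obtain ⟨J', hJ', hJJ'⟩ := hJ.subset_isBasis'_of_subset hJX
  have hcard := hJ'.encard_eq_encard hI
  calc J.ncard ≤ J'.ncard := Set.ncard_le_ncard hJJ'
        (M.ground_finite.subset hJ'.indep.subset_ground)
    _ = I.ncard := by rw [Set.ncard_def, hcard, ← Set.ncard_def]

lemma IsBasis.mRank_eq [M.Finite] (hI : M.IsBasis I X) : M.mRank X = I.ncard :=
  hI.isBasis'.mRank_eq

lemma Indep.mRank_eq [M.Finite] (hI : M.Indep I) : M.mRank I = I.ncard :=
  hI.isBasis_self.mRank_eq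

@[simp] lemma mRank_empty (M : Matroid α) [M.Finite] : M.mRank ∅ = 0 := by
  simpa using M.empty_indep.mRank_eq

lemma mRank_mono [M.Finite] (hXY : X ⊆ Y) : M.mRank X ≤ M.mRank Y := by
  obtain ⟨I, hI⟩ := M.exists_isBasis' X
  rw [hI.mRank_eq]
  exact le_mRank hI.indep (hI.subset.trans hXY)

lemma mRank_closure_eq (M : Matroid α) [M.Finite] (X : Set α) :
    M.mRank (M.closure X) = M.mRank X := by
  obtain ⟨I, hI⟩ := M.exists_isBasis' X
  rw [hI.mRank_eq, (hI.isBasis_closure_right).mRank_eq]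

lemma mRank_le_ncard [M.Finite] (hX : X ⊆ M.E) : M.mRank X ≤ X.ncard := by
  obtain ⟨I, hI⟩ := M.exists_isBasis' X
  rw [hI.mRank_eq]
  exact Set.ncard_le_ncard hI.subset (M.ground_finite.subset hX)

lemma closure_flat' (M : Matroid α) (X : Set α) : M.IsFlat (M.closure X) := by
  rw [isFlat_iff_isClosed]
  refine ⟨M.closure_subset_ground X, ?_⟩
  have : (⟨M.closure X, M.closure_subset_ground X⟩ : Iic M.E)
      = M.subtypeClosure ⟨X ∩ M.E, inter_subset_right⟩ := by
    ext1
    simpa using M.closure_eq_subtypeClosure X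
  rw [this]
  exact M.subtypeClosure.isClosed_closure _

lemma flat_iff_closure_self : M.IsFlat F ↔ M.closure F = F ∧ F ⊆ M.E := by
  refine ⟨fun h => ⟨h.closure, h.subset_ground⟩, fun ⟨h1, _⟩ => h1 ▸ M.closure_flat' F⟩

lemma IsFlat.inter' (hF : M.IsFlat F) (hF' : M.IsFlat F') : M.IsFlat (F ∩ F') := by
  rw [Set.inter_eq_iInter]
  exact IsFlat.iInter (M := M) (Fs := fun b : Bool => bif b then F else F')
    (by rintro (_|_) <;> simpa)

lemma mRank_insert_of_not_mem_closure [M.Finite] (hX : X ⊆ M.E) (he : e ∈ M.E)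
    (hecl : e ∉ M.closure X) : M.mRank (insert e X) = M.mRank X + 1 := by
  obtain ⟨I, hI⟩ := M.exists_isBasis X
  have heI : e ∉ M.closure I := by rwa [hI.closure_eq_closure]
  have hins : M.Indep (insert e I) :=
    (hI.indep.insert_indep_iff_of_notMem (fun h => heI (M.mem_closure_of_mem' h))).2 ⟨he, heI⟩
  have hbasis : M.IsBasis (insert e I) (insert e X) := by
    refine hins.isBasis_of_subset_of_subset_closure (insert_subset_insert hI.subset) ?_
    refine insert_subset (M.mem_closure_of_mem (mem_insert _ _)
      (insert_subset he hI.indep.subset_ground)) ?_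
    exact (hI.subset_closure).trans (M.closure_subset_closure (subset_insert _ _))
  rw [hbasis.mRank_eq, hI.mRank_eq,
    Set.ncard_insert_of_notMem (fun h => heI (M.mem_closure_of_mem' h))
      (M.ground_finite.subset hI.indep.subset_ground)]

lemma mRank_insert_le [M.Finite] (hX : X ⊆ M.E) (he : e ∈ M.E) :
    M.mRank (insert e X) ≤ M.mRank X + 1 := by
  by_cases hecl : e ∈ M.closure X
  · have : M.closure (insert e X) = M.closure X := closure_insert_eq_of_mem_closure hecl
    rw [← M.mRank_closure_eq (insert e X), this, M.mRank_closure_eq]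
    omega
  · rw [mRank_insert_of_not_mem_closure hX he hecl]

lemma IsFlat.eq_of_le_mRank [M.Finite] (hF : M.IsFlat F) (hF' : M.IsFlat F') (hss : F ⊆ F')
    (hr : M.mRank F' ≤ M.mRank F) : F = F' := by
  obtain ⟨I, hI⟩ := M.exists_isBasis F hF.subset_ground
  obtain ⟨J, hJ, hIJ⟩ := hI.indep.subset_isBasis_of_subset (hI.subset.trans hss)
    hF'.subset_ground
  have hIJ2 : I = J := by
    refine Set.eq_of_subset_of_ncard_le hIJ ?_ (M.ground_finite.subset hJ.indep.subset_ground)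
    rw [← hI.mRank_eq, ← hJ.mRank_eq]; exact hr
  refine hss.antisymm ?_
  have := hJ.subset_closure
  rw [← hIJ2, hI.closure_eq_closure, hF.closure] at this
  exact this

lemma mRank_submod [M.Finite] (hA : X ⊆ M.E) (hB : Y ⊆ M.E) :
    M.mRank (X ∪ Y) + M.mRank (X ∩ Y) ≤ M.mRank X + M.mRank Y := by
  obtain ⟨I, hI⟩ := M.exists_isBasis (X ∩ Y) (inter_subset_left.trans hA)
  obtain ⟨J, hJ, hIJ⟩ := hI.indep.subset_isBasis_of_subset
    (hI.subset.trans (inter_subset_left.trans subset_union_left)) (union_subset hA hB)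
  have hJfin : J.Finite := M.ground_finite.subset hJ.indep.subset_ground
  have h1 : M.mRank X + M.mRank Y ≥ (J ∩ X).ncard + (J ∩ Y).ncard := by
    gcongr
    · exact le_mRank (hJ.indep.subset inter_subset_left) inter_subset_right
    · exact le_mRank (hJ.indep.subset inter_subset_left) inter_subset_right
  have h2 : (J ∩ X) ∪ (J ∩ Y) = J := by
    rw [← inter_union_distrib_left, inter_eq_self_of_subset_left hJ.subset]
  have h3 : (J ∩ X) ∩ (J ∩ Y) = J ∩ (X ∩ Y) := by rw [inter_inter_inter_comm, inter_self]
  have h4 := Set.ncard_union_add_ncard_inter (J ∩ X) (J ∩ Y)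
    (hJfin.subset inter_subset_left) (hJfin.subset inter_subset_left)
  rw [h2, h3] at h4
  have h5 : I.ncard ≤ (J ∩ (X ∩ Y)).ncard :=
    Set.ncard_le_ncard (subset_inter hIJ hI.subset) (hJfin.subset inter_subset_left)
  rw [hJ.mRank_eq, hI.mRank_eq]
  omega

lemma restrict_mRank_eq (hXH : X ⊆ H) : (M ↾ H).mRank X = M.mRank X := by
  unfold mRank
  congr 1
  ext n
  constructor
  · rintro ⟨I, hI, hIX, rfl⟩
    exact ⟨I, (restrict_indep_iff.1 hI).1, hIX, rfl⟩
  · rintro ⟨I, hI, hIX, rfl⟩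
    exact ⟨I, restrict_indep_iff.2 ⟨hI, hIX.trans hXH⟩, hIX, rfl⟩

lemma restrict_closure_eq'' (hH : H ⊆ M.E) (hXH : X ⊆ H) :
    (M ↾ H).closure X = M.closure X ∩ H := by
  obtain ⟨I, hI⟩ := M.exists_isBasis X (hXH.trans hH)
  have hI' : (M ↾ H).IsBasis I X := hI.isBasis_restrict_of_subset hXH
  rw [← hI'.closure_eq_closure, ← hI.closure_eq_closure]
  ext x
  simp only [mem_inter_iff]
  rw [hI.indep.mem_closure_iff',
    Indep.mem_closure_iff' (M := M ↾ H) (restrict_indep_iff.2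
      ⟨hI.indep, hI.subset.trans hXH⟩)]
  simp only [restrict_ground_eq, restrict_indep_iff]
  constructor
  · rintro ⟨hxH, h2⟩
    exact ⟨⟨hH hxH, fun hi => h2 ⟨hi, insert_subset hxH (hI.subset.trans hXH)⟩⟩, hxH⟩
  · rintro ⟨⟨hxE, h2⟩, hxH⟩
    exact ⟨hxH, fun hi => h2 hi.1⟩

lemma restrict_flat_iff' (hHflat : M.IsFlat H) :
    (M ↾ H).IsFlat F ↔ M.IsFlat F ∧ F ⊆ H := by
  have hH := hHflat.subset_ground
  rw [flat_iff_closure_self, flat_iff_closure_self (M := M), restrict_ground_eq]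
  constructor
  · rintro ⟨h1, h2⟩
    rw [restrict_closure_eq'' hH h2] at h1
    have hsub : M.closure F ⊆ H := by
      rw [← hHflat.closure]; exact M.closure_subset_closure h2
    rw [inter_eq_self_of_subset_left hsub] at h1
    exact ⟨⟨h1, h2.trans hH⟩, h2⟩
  · rintro ⟨⟨h1, h2⟩, h3⟩
    rw [restrict_closure_eq'' hH h3, h1]
    exact ⟨inter_eq_self_of_subset_left h3, h3⟩

lemma closure_pair_congr (h : M.closure {a} = M.closure {c}) (d : α) :
    M.closure {a, d} = M.closure {c, d} := by
  rw [show ({a, d} : Set α) = {a} ∪ {d} by rfl, show ({c, d} : Set α) = {c} ∪ {d} by rfl,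
    ← closure_union_closure_left_eq, h, closure_union_closure_left_eq]

lemma indep_singleton_of (he : e ∈ M.E) (hnl : e ∉ M.closure ∅) : M.Indep {e} := by
  have := (M.empty_indep.insert_indep_iff_of_notMem (notMem_empty e)).2 ⟨he, hnl⟩
  simpa using this

lemma closure_singleton_congr (hx : x ∈ M.E) (hy : y ∉ M.closure ∅)
    (h : y ∈ M.closure {x}) : M.closure {y} = M.closure {x} := by
  refine subset_antisymm
    (closure_subset_closure_of_subset_closure (singleton_subset_iff.2 h)) ?_
  have hex : x ∈ M.closure (insert y ∅) \ M.closure ∅ := by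
    refine closure_exchange (e := y) (f := x) (X := ∅) ?_
    simpa using ⟨h, hy⟩
  refine closure_subset_closure_of_subset_closure (singleton_subset_iff.2 ?_)
  simpa using hex.1

lemma mRank_pair_eq_two [M.Finite] (hx : x ∈ M.E) (hy : y ∈ M.E)
    (hxnl : x ∉ M.closure ∅) (hynl : y ∉ M.closure ∅)
    (hne : M.closure {x} ≠ M.closure {y}) : M.mRank {x, y} = 2 := by
  have hxy : x ∉ M.closure {y} := fun h => hne (closure_singleton_congr hy hxnl h)
  have := mRank_insert_of_not_mem_closure (singleton_subset_iff.2 hy) hx hxy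
  rw [show ({x, y} : Set α) = insert x {y} by rfl, this,
    (indep_singleton_of hy hynl).mRank_eq, ncard_singleton]

lemma mRank_union_hyperplane_eq [M.Finite] (hH : M.IsHyperplane H) (hXE : X ⊆ M.E)
    (hx : x ∈ X) (hxH : x ∉ H) : M.mRank (H ∪ X) = M.mRk := by
  have hHE := hH.1.subset_ground
  refine le_antisymm (mRank_mono (union_subset hHE hXE)) ?_
  have h1 : M.mRank (insert x H) = M.mRank H + 1 :=
    mRank_insert_of_not_mem_closure hHE (hXE hx) (by rwa [hH.1.closure])
  have h2 : M.mRank (insert x H) ≤ M.mRank (H ∪ X) :=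
    mRank_mono (insert_subset (Or.inr hx) subset_union_left)
  have hrk := hH.2
  omega

lemma proj_point [M.Finite] (hH : M.IsHyperplane H) (hmod : M.IsModularFlat H)
    (ha : a ∈ M.E \ H) (hb : b ∈ M.E \ H) (hne : M.closure {a} ≠ M.closure {b}) :
    M.mRank (H ∩ M.closure {a, b}) = 1 ∧
      ∃ x, M.Indep {x} ∧ x ∈ H ∩ M.closure {a, b} ∧
        M.closure {x} = H ∩ M.closure {a, b} ∧ b ∈ M.closure {a, x} := by
  have hHflat := hH.1
  have hHE := hHflat.subset_ground
  have hclH : M.closure ∅ ⊆ H := by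
    rw [← hHflat.closure]; exact M.closure_subset_closure (empty_subset _)
  have hanl : a ∉ M.closure ∅ := fun h => ha.2 (hclH h)
  have hbnl : b ∉ M.closure ∅ := fun h => hb.2 (hclH h)
  have hrab : M.mRank {a, b} = 2 := mRank_pair_eq_two ha.1 hb.1 hanl hbnl hne
  set L := M.closure {a, b} with hL
  have hLflat : M.IsFlat L := M.closure_flat' _
  have haL : a ∈ L := M.mem_closure_of_mem' (mem_insert _ _) ha.1
  have hbL : b ∈ L := M.mem_closure_of_mem' (mem_insert_of_mem _ rfl) hb.1
  have hrL : M.mRank L = 2 := by rw [hL, mRank_closure_eq, hrab]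
  have hmeq := hmod.2 L hLflat
  have hHL : M.mRank (H ∪ L) = M.mRk :=
    mRank_union_hyperplane_eq hH hLflat.subset_ground haL ha.2
  have hrk := hH.2
  have hrpt : M.mRank (H ∩ L) = 1 := by omega
  have hptflat : M.IsFlat (H ∩ L) := hHflat.inter' hLflat
  obtain ⟨I, hI⟩ := M.exists_isBasis (H ∩ L) hptflat.subset_ground
  have hI1 : I.ncard = 1 := by rw [← hI.mRank_eq, hrpt]
  obtain ⟨x, rfl⟩ := Set.ncard_eq_one.1 hI1
  have hxpt : x ∈ H ∩ L := hI.subset rfl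
  have hclx : M.closure {x} = H ∩ L := by
    refine IsFlat.eq_of_le_mRank (M.closure_flat' _) hptflat ?_ ?_
    · rw [← hptflat.closure]; exact M.closure_subset_closure (singleton_subset_iff.2 hxpt)
    · rw [mRank_closure_eq, hI.indep.mRank_eq, ncard_singleton, hrpt]
  have hxnl : x ∉ M.closure ∅ := by
    have := hI.indep.notMem_closure_sdiff_of_mem (mem_singleton x)
    simpa using this
  have haxne : M.closure {a} ≠ M.closure {x} := by
    intro h
    exact ha.2 (hclx ▸ h ▸ M.mem_closure_of_mem' (mem_singleton a) ha.1).1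
  refine ⟨hrpt, x, hI.indep, hxpt, hclx, ?_⟩
  have hclax : M.closure {a, x} = L := by
    refine IsFlat.eq_of_le_mRank (M.closure_flat' _) hLflat ?_ ?_
    · rw [← hLflat.closure]
      exact M.closure_subset_closure (insert_subset haL (singleton_subset_iff.2 hxpt.2))
    · have h2 : M.mRank (M.closure {a, x}) = 2 := by
        rw [mRank_closure_eq]
        exact mRank_pair_eq_two ha.1 (hHE hxpt.1) hanl hxnl haxne
      omega
  rw [hclax]
  exact hbL

lemma proj_triangle [M.Finite] (hH : M.IsHyperplane H) (hmod : M.IsModularFlat H)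
    (ha : a ∈ M.E \ H) (hb : b ∈ M.E \ H) (hc : c ∈ M.E \ H)
    (hab : M.closure {a} ≠ M.closure {b}) (hbc : M.closure {b} ≠ M.closure {c})
    (hac : M.closure {a} ≠ M.closure {c}) (hF : M.IsFlat F)
    (h1 : H ∩ M.closure {a, b} ⊆ F) (h2 : H ∩ M.closure {b, c} ⊆ F) :
    H ∩ M.closure {a, c} ⊆ F := by
  have hHflat := hH.1
  have hHE := hHflat.subset_ground
  have hrk := hH.2
  have hclH : M.closure ∅ ⊆ H := by
    rw [← hHflat.closure]; exact M.closure_subset_closure (empty_subset _)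
  have hanl : a ∉ M.closure ∅ := fun h => ha.2 (hclH h)
  have hbnl : b ∉ M.closure ∅ := fun h => hb.2 (hclH h)
  have hcnl : c ∉ M.closure ∅ := fun h => hc.2 (hclH h)
  set T := M.closure {a, b, c} with hT
  have hTflat : M.IsFlat T := M.closure_flat' _
  have habc : ({a, b, c} : Set α) ⊆ M.E :=
    insert_subset ha.1 (insert_subset hb.1 (singleton_subset_iff.2 hc.1))
  have hsubab : M.closure {a, b} ⊆ T := M.closure_subset_closure (by
    intro z hz; rcases hz with rfl | rfl; · exact mem_insert _ _
    · exact mem_insert_of_mem _ (mem_insert _ _))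
  have hsubbc : M.closure {b, c} ⊆ T := M.closure_subset_closure (by
    intro z hz; exact mem_insert_of_mem _ hz)
  have hsubac : M.closure {a, c} ⊆ T := M.closure_subset_closure (by
    intro z hz; rcases hz with rfl | rfl; · exact mem_insert _ _
    · exact mem_insert_of_mem _ (mem_insert_of_mem _ rfl))
  have hrab : M.mRank {a, b} = 2 := mRank_pair_eq_two ha.1 hb.1 hanl hbnl hab
  have hrbc : M.mRank {b, c} = 2 := mRank_pair_eq_two hb.1 hc.1 hbnl hcnl hbc
  have hrac : M.mRank {a, c} = 2 := mRank_pair_eq_two ha.1 hc.1 hanl hcnl hac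
  have hss_ab : ({a, b} : Set α) ⊆ {a, b, c} := by
    intro z hz; rcases hz with rfl | rfl
    · exact mem_insert _ _
    · exact mem_insert_of_mem _ (mem_insert _ _)
  have hss_ac : ({a, c} : Set α) ⊆ {a, b, c} := by
    intro z hz; rcases hz with rfl | rfl
    · exact mem_insert _ _
    · exact mem_insert_of_mem _ (mem_insert_of_mem _ rfl)
  have hrTeq : M.mRank T = M.mRank {a, b, c} := mRank_closure_eq M _
  have hT2 : 2 ≤ M.mRank {a, b, c} := hrab ▸ mRank_mono hss_ab
  have hT3 : M.mRank {a, b, c} ≤ 3 := by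
    have := mRank_insert_le (M := M) (X := {b, c}) (e := a)
      (insert_subset hb.1 (singleton_subset_iff.2 hc.1)) ha.1
    omega
  have haT : a ∈ T := M.mem_closure_of_mem' (mem_insert _ _) ha.1
  rcases (by omega : M.mRank {a, b, c} = 2 ∨ M.mRank {a, b, c} = 3) with h2' | h3'
  · -- degenerate case: all closures coincide
    have hclabT : M.closure {a, b} = T := by
      refine IsFlat.eq_of_le_mRank (M.closure_flat' _) hTflat hsubab ?_
      rw [hrTeq, h2', mRank_closure_eq, hrab]
    have hclacT : M.closure {a, c} = T := by
      refine IsFlat.eq_of_le_mRank (M.closure_flat' _) hTflat hsubac ?_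
      rw [hrTeq, h2', mRank_closure_eq, hrac]
    rw [hclacT, ← hclabT]
    exact h1
  · -- nondegenerate case
    set L := H ∩ T with hLdef
    have hLflat : M.IsFlat L := hHflat.inter' hTflat
    have hmeq := hmod.2 T hTflat
    have hHT : M.mRank (H ∪ T) = M.mRk :=
      mRank_union_hyperplane_eq hH hTflat.subset_ground haT ha.2
    have hrL : M.mRank L = 2 := by
      rw [hrTeq, h3', hHT] at hmeq
      show M.mRank (H ∩ T) = 2
      omega
    obtain ⟨-, x, hxind, hxmem, hxcl, -⟩ := proj_point hH hmod ha hb hab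
    obtain ⟨-, y, hyind, hymem, hycl, -⟩ := proj_point hH hmod hb hc hbc
    have hxnl : x ∉ M.closure ∅ := by
      have := hxind.notMem_closure_sdiff_of_mem (mem_singleton x)
      simpa using this
    have hynl : y ∉ M.closure ∅ := by
      have := hyind.notMem_closure_sdiff_of_mem (mem_singleton y)
      simpa using this
    have hxyne : M.closure {x} ≠ M.closure {y} := by
      intro hxy
      -- then the two projection points coincide, forcing cl {a,b} = cl {b,c}
      have hbx : M.closure {b} ≠ M.closure {x} := by
        intro h
        exact hb.2 (hxcl ▸ h ▸ M.mem_closure_of_mem' (mem_singleton b) hb.1).1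
      have hbmem_ab : b ∈ M.closure {a, b} ∩ M.closure {b, c} :=
        ⟨M.mem_closure_of_mem' (mem_insert_of_mem _ rfl) hb.1,
          M.mem_closure_of_mem' (mem_insert _ _) hb.1⟩
      have hxmem2 : x ∈ M.closure {a, b} ∩ M.closure {b, c} := by
        refine ⟨hxmem.2, ?_⟩
        have : x ∈ M.closure {y} := hxy ▸ M.mem_closure_of_mem' (mem_singleton x)
          (hxind.subset_ground rfl)
        exact (hycl ▸ this).2
      have hDflat : M.IsFlat (M.closure {a, b} ∩ M.closure {b, c}) :=
        (M.closure_flat' _).inter' (M.closure_flat' _)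
      have hrbx : M.mRank {b, x} = 2 :=
        mRank_pair_eq_two hb.1 (hxind.subset_ground rfl) hbnl hxnl hbx
      have hD2 : 2 ≤ M.mRank (M.closure {a, b} ∩ M.closure {b, c}) := by
        rw [← hrbx]
        exact mRank_mono (insert_subset hbmem_ab (singleton_subset_iff.2 hxmem2))
      have hDab : M.closure {a, b} ∩ M.closure {b, c} = M.closure {a, b} := by
        refine IsFlat.eq_of_le_mRank hDflat (M.closure_flat' _) inter_subset_left ?_
        rw [mRank_closure_eq, hrab]; omega
      have hDbc : M.closure {a, b} ∩ M.closure {b, c} = M.closure {b, c} := by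
        refine IsFlat.eq_of_le_mRank hDflat (M.closure_flat' _) inter_subset_right ?_
        rw [mRank_closure_eq, hrbc]; omega
      have habbc : M.closure {a, b} = M.closure {b, c} := hDab ▸ hDbc
      have hcmem : c ∈ M.closure {a, b} := habbc ▸
        M.mem_closure_of_mem' (mem_insert_of_mem _ rfl) hc.1
      have : M.closure {a, b, c} = M.closure {a, b} := by
        have heq : ({a, b, c} : Set α) = insert c {a, b} := by
          ext z; simp only [mem_insert_iff, mem_singleton_iff]; tauto
        rw [heq, closure_insert_eq_of_mem_closure hcmem]
      rw [← hrTeq, hT, this, mRank_closure_eq, hrab] at h3'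
      omega
    have hxL : x ∈ L := ⟨hxmem.1, hsubab hxmem.2⟩
    have hyL : y ∈ L := ⟨hymem.1, hsubbc hymem.2⟩
    have hclxyL : M.closure {x, y} = L := by
      refine IsFlat.eq_of_le_mRank (M.closure_flat' _) hLflat ?_ ?_
      · rw [← hLflat.closure]
        exact M.closure_subset_closure (insert_subset hxL (singleton_subset_iff.2 hyL))
      · rw [mRank_closure_eq, hrL,
          mRank_pair_eq_two (hxind.subset_ground rfl) (hyind.subset_ground rfl) hxnl hynl hxyne]
    have hLF : L ⊆ F := by
      rw [← hclxyL, ← hF.closure]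
      exact M.closure_subset_closure
        (insert_subset (h1 hxmem) (singleton_subset_iff.2 (h2 hymem)))
    intro z hz
    exact hLF ⟨hz.1, hsubac hz.2⟩

lemma mem_projUnion (ha : a ∈ X) (hb : b ∈ X) (hne : M.closure {a} ≠ M.closure {b})
    (hx : x ∈ H ∩ M.closure {a, b}) : x ∈ M.projUnion H X := by
  simp only [projUnion, mem_iUnion, exists_prop]
  exact ⟨a, ha, b, hb, hne, hx⟩

lemma aux_main [M.Finite] (hH : M.IsHyperplane H) (hmod : M.IsModularFlat H)
    (hF : M.IsFlat F) (hFH : F ⊆ H) (hFne : F ≠ H)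
    (hG : M.IsFlat G) (hGH : G ⊆ H) (hGne : G ≠ H)
    (hun : F ∪ G = H)
    (hP : M.projUnion H (M.E \ H) ⊆ F) :
    M.VerticalCover (F ∪ (M.E \ H)) G ∧
      ((M ↾ H).IsModularFlat F → (M ↾ H).IsModularFlat G →
        M.IsModularFlat (F ∪ (M.E \ H)) ∧ M.IsModularFlat G) := by
  have hHflat := hH.1
  have hHE := hHflat.subset_ground
  have hrk := hH.2
  have hFE : F ⊆ M.E := hFH.trans hHE
  have hGE : G ⊆ M.E := hGH.trans hHE
  -- the complementary cocircuit is nonempty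
  have hCne : (M.E \ H).Nonempty := by
    rw [Set.nonempty_iff_ne_empty]
    intro h
    have hHeq : H = M.E := hHE.antisymm (Set.diff_eq_empty.mp h)
    have hrfl : M.mRk = M.mRank M.E := rfl
    rw [hHeq] at hrk
    omega
  obtain ⟨a, ha⟩ := hCne
  set K := F ∪ (M.E \ H) with hKdef
  have haK : a ∈ K := Or.inr ha
  have haF : a ∉ M.closure F := by rw [hF.closure]; exact fun h => ha.2 (hFH h)
  -- K is the closure of F ∪ {a}
  have hKcl : M.closure (insert a F) = K := by
    have hsub1 : K ⊆ M.closure (insert a F) := by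
      rintro z (hz | hz)
      · exact M.subset_closure _ (insert_subset ha.1 hFE) (mem_insert_of_mem _ hz)
      · by_cases hza : M.closure {z} = M.closure {a}
        · have : z ∈ M.closure {a} := hza ▸ M.mem_closure_of_mem' rfl hz.1
          exact M.closure_subset_closure (singleton_subset_iff.2 (mem_insert _ _)) this
        · obtain ⟨-, w, hwind, hwmem, hwcl, hbw⟩ :=
            proj_point hH hmod ha hz (fun h => hza h.symm)
          have hwF : w ∈ F := hP (mem_projUnion ha hz (fun h => hza h.symm) hwmem)
          exact M.closure_subset_closure
            (insert_subset (mem_insert _ _) (singleton_subset_iff.2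
              (mem_insert_of_mem _ hwF))) hbw
    have hrins : M.mRank (insert a F) = M.mRank F + 1 :=
      mRank_insert_of_not_mem_closure hFE ha.1 haF
    have hKflat' : M.IsFlat (M.closure (insert a F)) := M.closure_flat' _
    have haK' : a ∈ M.closure (insert a F) :=
      M.subset_closure _ (insert_subset ha.1 hFE) (mem_insert _ _)
    have hmeq := hmod.2 _ hKflat'
    have hHK : M.mRank (H ∪ M.closure (insert a F)) = M.mRk :=
      mRank_union_hyperplane_eq hH hKflat'.subset_ground haK' ha.2
    have hrcl : M.mRank (M.closure (insert a F)) = M.mRank F + 1 := by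
      rw [mRank_closure_eq, hrins]
    have hHint : H ∩ M.closure (insert a F) = F := by
      refine (hF.eq_of_le_mRank (hHflat.inter' hKflat') (subset_inter hFH ?_) ?_).symm
      · exact (M.subset_closure _ (insert_subset ha.1 hFE)).trans'  (subset_insert _ _)
      · omega
    refine subset_antisymm ?_ hsub1
    intro z hz
    have hzE : z ∈ M.E := M.closure_subset_ground _ hz
    by_cases hzH : z ∈ H
    · exact Or.inl (hHint ▸ mem_inter hzH hz)
    · exact Or.inr ⟨hzE, hzH⟩
  have hKflat : M.IsFlat K := hKcl ▸ M.closure_flat' _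
  have hrK : M.mRank K = M.mRank F + 1 := by
    rw [← hKcl, mRank_closure_eq, mRank_insert_of_not_mem_closure hFE ha.1 haF]
  have hHK_int : H ∩ K = F := by
    refine subset_antisymm ?_ (subset_inter hFH Set.subset_union_left)
    rintro z ⟨hzH, (hzF | hzC)⟩
    · exact hzF
    · exact absurd hzH hzC.2
  have hKE : K ⊆ M.E := union_subset hFE diff_subset
  -- vertical cover
  obtain ⟨e, heG, heF⟩ : ∃ e, e ∈ G ∧ e ∉ F := by
    by_contra h
    push_neg at h
    exact hFne (hun ▸ (union_eq_self_of_subset_right h).symm ▸ rfl)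
  have heK : e ∉ K := by
    rintro (h | h)
    · exact heF h
    · exact h.2 (hGH heG)
  have hvc : M.VerticalCover K G := by
    refine ⟨⟨hKflat, fun h => heK (h ▸ hGE heG)⟩, ⟨hG, fun h => ha.2 (hGH (h ▸ ha.1))⟩, ?_⟩
    rw [hKdef, union_right_comm, hun, union_diff_cancel hHE]
  refine ⟨hvc, fun hFmodr hGmodr => ?_⟩
  -- modularity of G
  have hGmod : M.IsModularFlat G := by
    refine ⟨hG, fun F' hF' => ?_⟩
    have hF'E := hF'.subset_ground
    set Fh := H ∩ F' with hFhdef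
    have hFhflat : M.IsFlat Fh := hHflat.inter' hF'
    have hFhH : Fh ⊆ H := inter_subset_left
    have htrans := hGmodr.2 Fh ((restrict_flat_iff' hHflat).2 ⟨hFhflat, hFhH⟩)
    rw [restrict_mRank_eq hGH, restrict_mRank_eq hFhH,
      restrict_mRank_eq (union_subset hGH hFhH),
      restrict_mRank_eq ((inter_subset_left).trans hGH)] at htrans
    have hGFh : G ∩ Fh = G ∩ F' := by
      ext z
      simp only [hFhdef, mem_inter_iff]
      exact ⟨fun ⟨h1, _, h3⟩ => ⟨h1, h3⟩, fun ⟨h1, h2⟩ => ⟨h1, hGH h1, h2⟩⟩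
    rw [hGFh] at htrans
    have hsub := mRank_submod (M := M) (X := G) (Y := F') hGE hF'E
    by_cases hF'H : F' ⊆ H
    · rw [hFhdef, inter_eq_self_of_subset_right hF'H] at htrans
      omega
    · obtain ⟨x, hxF', hxH⟩ := not_subset.1 hF'H
      have ht2 := hmod.2 F' hF'
      rw [mRank_union_hyperplane_eq hH hF'E hxF' hxH, ← hFhdef] at ht2
      have hsub2 := mRank_submod (M := M) (X := G ∪ F') (Y := H)
        (union_subset hGE hF'E) hHE
      have he1 : (G ∪ F') ∪ H = H ∪ F' := by
        rw [union_assoc, union_comm F' H, ← union_assoc, union_eq_self_of_subset_left hGH]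
      have he2 : (G ∪ F') ∩ H = G ∪ Fh := by
        ext z
        simp only [mem_inter_iff, mem_union, hFhdef]
        constructor
        · rintro ⟨h1 | h1, h2⟩
          · exact Or.inl h1
          · exact Or.inr ⟨h2, h1⟩
        · rintro (h1 | ⟨h1, h2⟩)
          · exact ⟨Or.inl h1, hGH h1⟩
          · exact ⟨Or.inr h2, h1⟩
      rw [he1, he2, mRank_union_hyperplane_eq hH hF'E hxF' hxH] at hsub2
      omega
  -- modularity of K
  have hKmod : M.IsModularFlat K := by
    refine ⟨hKflat, fun F' hF' => ?_⟩
    have hF'E := hF'.subset_ground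
    set Fh := H ∩ F' with hFhdef
    have hFhflat : M.IsFlat Fh := hHflat.inter' hF'
    have hFhH : Fh ⊆ H := inter_subset_left
    have htrans := hFmodr.2 Fh ((restrict_flat_iff' hHflat).2 ⟨hFhflat, hFhH⟩)
    rw [restrict_mRank_eq hFH, restrict_mRank_eq hFhH,
      restrict_mRank_eq (union_subset hFH hFhH),
      restrict_mRank_eq ((inter_subset_left).trans hFH)] at htrans
    have hFFh : F ∩ Fh = F ∩ F' := by
      ext z
      simp only [hFhdef, mem_inter_iff]
      exact ⟨fun ⟨h1, _, h3⟩ => ⟨h1, h3⟩, fun ⟨h1, h2⟩ => ⟨h1, hFH h1, h2⟩⟩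
    rw [hFFh] at htrans
    have hsub := mRank_submod (M := M) (X := K) (Y := F') hKE hF'E
    have haFFh : a ∉ M.closure (F ∪ Fh) := by
      intro hmem
      refine ha.2 ?_
      have : M.closure (F ∪ Fh) ⊆ H := by
        rw [← hHflat.closure]
        exact M.closure_subset_closure (union_subset hFH hFhH)
      exact this hmem
    have hins : M.mRank (insert a (F ∪ Fh)) = M.mRank (F ∪ Fh) + 1 :=
      mRank_insert_of_not_mem_closure (union_subset hFE (hFhH.trans hHE)) ha.1 haFFh
    have hKF'big : M.mRank (F ∪ Fh) + 1 ≤ M.mRank (K ∪ F') := by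
      rw [← hins]
      refine mRank_mono (insert_subset (Or.inl haK) (union_subset ?_ ?_))
      · exact subset_union_left.trans (subset_union_left)
      · exact (inter_subset_right).trans subset_union_right
    by_cases hF'H : F' ⊆ H
    · have hKF'int : K ∩ F' = F ∩ F' := by
        ext z
        simp only [hKdef, mem_inter_iff, mem_union, mem_diff]
        constructor
        · rintro ⟨h1 | h1, h2⟩
          · exact ⟨h1, h2⟩
          · exact absurd (hF'H h2) h1.2
        · rintro ⟨h1, h2⟩
          exact ⟨Or.inl h1, h2⟩
      rw [hKF'int] at hsub ⊢
      rw [hFhdef, inter_eq_self_of_subset_right hF'H] at htrans hKF'big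
      omega
    · obtain ⟨x, hxF', hxH⟩ := not_subset.1 hF'H
      have ht2 := hmod.2 F' hF'
      rw [mRank_union_hyperplane_eq hH hF'E hxF' hxH, ← hFhdef] at ht2
      have hxK : x ∈ K ∩ F' := ⟨Or.inr ⟨hF'E hxF', hxH⟩, hxF'⟩
      have hxclFF' : x ∉ M.closure (F ∩ F') := by
        intro hmem
        refine hxH ?_
        have : M.closure (F ∩ F') ⊆ H := by
          rw [← hHflat.closure]
          exact M.closure_subset_closure ((inter_subset_left).trans hFH)
        exact this hmem
      have hins2 : M.mRank (insert x (F ∩ F')) = M.mRank (F ∩ F') + 1 :=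
        mRank_insert_of_not_mem_closure ((inter_subset_left).trans hFE) (hF'E hxF') hxclFF'
      have hKF'int_big : M.mRank (F ∩ F') + 1 ≤ M.mRank (K ∩ F') := by
        rw [← hins2]
        refine mRank_mono (insert_subset hxK ?_)
        exact inter_subset_inter_left _ subset_union_left
      omega
  exact ⟨hKmod, hGmod⟩

lemma proj_subset_or [M.Finite] (hH : M.IsHyperplane H) (hmod : M.IsModularFlat H)
    (hF₁flat : M.IsFlat F₁) (hF₂flat : M.IsFlat F₂) (hun : F₁ ∪ F₂ = H) :
    M.projUnion H (M.E \ H) ⊆ F₁ ∨ M.projUnion H (M.E \ H) ⊆ F₂ := by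
  have symm : ∀ (Fs : Set α) (x y : α),
      H ∩ M.closure {x, y} ⊆ Fs → H ∩ M.closure {y, x} ⊆ Fs := fun Fs x y h => by
    rwa [Set.pair_comm y x]
  have tot : ∀ x y, x ∈ M.E \ H → y ∈ M.E \ H → M.closure {x} ≠ M.closure {y} →
      (H ∩ M.closure {x, y} ⊆ F₁) ∨ (H ∩ M.closure {x, y} ⊆ F₂) := by
    intro x y hx hy hne
    obtain ⟨-, w, hwind, hwmem, hwcl, -⟩ := proj_point hH hmod hx hy hne
    have hwH : w ∈ F₁ ∪ F₂ := hun ▸ hwmem.1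
    rcases hwH with h | h
    · refine Or.inl ?_
      rw [← hwcl, ← hF₁flat.closure]
      exact M.closure_subset_closure (singleton_subset_iff.2 h)
    · refine Or.inr ?_
      rw [← hwcl, ← hF₂flat.closure]
      exact M.closure_subset_closure (singleton_subset_iff.2 h)
  by_cases h1 : M.projUnion H (M.E \ H) ⊆ F₁
  · exact Or.inl h1
  refine Or.inr ?_
  obtain ⟨p, hpP, hpF₁⟩ := not_subset.1 h1
  simp only [projUnion, mem_iUnion, exists_prop] at hpP
  obtain ⟨a, ha, b, hb, hab, hp⟩ := hpP
  have hn1 : ¬ (H ∩ M.closure {a, b} ⊆ F₁) := fun h => hpF₁ (h hp)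
  have hR2ab : H ∩ M.closure {a, b} ⊆ F₂ := (tot a b ha hb hab).resolve_left hn1
  intro q hq
  simp only [projUnion, mem_iUnion, exists_prop] at hq
  obtain ⟨c, hc, d, hd, hcd, hq'⟩ := hq
  by_contra hqF₂
  have hn2 : ¬ (H ∩ M.closure {c, d} ⊆ F₂) := fun h => hqF₂ (h hq')
  have hR1cd : H ∩ M.closure {c, d} ⊆ F₁ := (tot c d hc hd hcd).resolve_right hn2
  clear hq' hp hpF₁ h1 hqF₂
  by_cases hca : M.closure {c} = M.closure {a}
  · have had : M.closure {a} ≠ M.closure {d} := fun h => hcd (hca.trans h)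
    have hcd_ad : M.closure {c, d} = M.closure {a, d} := closure_pair_congr hca d
    have hR1ad : H ∩ M.closure {a, d} ⊆ F₁ := hcd_ad ▸ hR1cd
    have hn2ad : ¬ (H ∩ M.closure {a, d} ⊆ F₂) := fun h => hn2 (hcd_ad ▸ h)
    by_cases hdb : M.closure {d} = M.closure {b}
    · refine hn2ad ?_
      have hadab : M.closure {a, d} = M.closure {a, b} := by
        rw [Set.pair_comm a d, Set.pair_comm a b]
        exact closure_pair_congr hdb a
      exact hadab ▸ hR2ab
    · have hbd : M.closure {b} ≠ M.closure {d} := fun h => hdb h.symm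
      rcases tot b d hb hd hbd with h | h
      · exact hn1 (proj_triangle hH hmod ha hd hb had (fun hh => hdb hh) hab
          hF₁flat hR1ad (symm F₁ b d h))
      · exact hn2ad (proj_triangle hH hmod ha hb hd hab hbd had hF₂flat hR2ab h)
  by_cases hcb : M.closure {c} = M.closure {b}
  · have hbd : M.closure {b} ≠ M.closure {d} := fun h => hcd (hcb.trans h)
    have hcd_bd : M.closure {c, d} = M.closure {b, d} := closure_pair_congr hcb d
    have hR1bd : H ∩ M.closure {b, d} ⊆ F₁ := hcd_bd ▸ hR1cd
    have hn2bd : ¬ (H ∩ M.closure {b, d} ⊆ F₂) := fun h => hn2 (hcd_bd ▸ h)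
    by_cases hda : M.closure {d} = M.closure {a}
    · refine hn2bd ?_
      have hbdab : M.closure {b, d} = M.closure {a, b} := by
        rw [Set.pair_comm b d, Set.pair_comm a b]
        exact (closure_pair_congr hda b).trans (by rw [Set.pair_comm a b])
      exact hbdab ▸ hR2ab
    · have had : M.closure {a} ≠ M.closure {d} := fun h => hda h.symm
      rcases tot a d ha hd had with h | h
      · exact hn1 (proj_triangle hH hmod ha hd hb had (fun hh => hcd (hcb.trans hh.symm)) hab
          hF₁flat h (symm F₁ b d hR1bd))
      · exact hn2bd (proj_triangle hH hmod hb ha hd (fun hh => hab hh.symm) had hbd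
          hF₂flat (symm F₂ a b hR2ab) h)
  -- now cl c differs from both cl a and cl b
  have hac : M.closure {a} ≠ M.closure {c} := fun h => hca h.symm
  have hbc : M.closure {b} ≠ M.closure {c} := fun h => hcb h.symm
  by_cases hda : M.closure {d} = M.closure {a}
  · have hcd_ca : M.closure {c, d} = M.closure {c, a} := by
      rw [Set.pair_comm c d, Set.pair_comm c a]
      exact closure_pair_congr hda c
    have hR1ca : H ∩ M.closure {c, a} ⊆ F₁ := hcd_ca ▸ hR1cd
    have hn2ca : ¬ (H ∩ M.closure {c, a} ⊆ F₂) := fun h => hn2 (hcd_ca ▸ h)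
    rcases tot b c hb hc hbc with h | h
    · exact hn1 (proj_triangle hH hmod ha hc hb hac (fun hh => hcb hh) hab
        hF₁flat (symm F₁ c a hR1ca) (symm F₁ b c h))
    · exact hn2ca (symm F₂ a c (proj_triangle hH hmod ha hb hc hab hbc hac
        hF₂flat hR2ab h))
  by_cases hdb : M.closure {d} = M.closure {b}
  · have hcd_cb : M.closure {c, d} = M.closure {c, b} := by
      rw [Set.pair_comm c d, Set.pair_comm c b]
      exact closure_pair_congr hdb c
    have hR1cb : H ∩ M.closure {c, b} ⊆ F₁ := hcd_cb ▸ hR1cd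
    have hn2cb : ¬ (H ∩ M.closure {c, b} ⊆ F₂) := fun h => hn2 (hcd_cb ▸ h)
    rcases tot a c ha hc hac with h | h
    · exact hn1 (proj_triangle hH hmod ha hc hb hac (fun hh => hcb hh) hab
        hF₁flat h hR1cb)
    · exact hn2cb (proj_triangle hH hmod hc ha hb hca hab (fun hh => hcb hh)
        hF₂flat (symm F₂ a c h) hR2ab)
  -- all four closures distinct
  have had : M.closure {a} ≠ M.closure {d} := fun h => hda h.symm
  have hbd : M.closure {b} ≠ M.closure {d} := fun h => hdb h.symm
  have hR1ac : H ∩ M.closure {a, c} ⊆ F₁ := by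
    rcases tot a c ha hc hac with h | h
    · exact h
    · rcases tot a d ha hd had with h' | h'
      · exact proj_triangle hH hmod ha hd hc had (fun hh => hcd hh.symm) hac
          hF₁flat h' (symm F₁ c d hR1cd)
      · exact absurd (proj_triangle hH hmod hc ha hd hca had hcd
          hF₂flat (symm F₂ a c h) h') hn2
  have hR1ad : H ∩ M.closure {a, d} ⊆ F₁ :=
    proj_triangle hH hmod ha hc hd hac hcd had hF₁flat hR1ac hR1cd
  rcases tot b c hb hc hbc with h | h
  · exact hn1 (proj_triangle hH hmod ha hc hb hac (fun hh => hcb hh) hab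
      hF₁flat hR1ac (symm F₁ b c h))
  · rcases tot b d hb hd hbd with h' | h'
    · exact hn1 (proj_triangle hH hmod ha hd hb had (fun hh => hdb hh) hab
        hF₁flat hR1ad (symm F₁ b d h'))
    · exact hn2 (proj_triangle hH hmod hc hb hd hcb hbd hcd
        hF₂flat (symm F₂ b c h) h')

end AuxLemmas

end Matroid

/-- Let `H` be a modular hyperplane with complementary cocircuit `C* = E(M) − H`, let
`(F₁, F₂)` be a vertical cover of `M ↾ H`, and let `P` be the union of projections onto `H`
of pairs of distinct rank-one flats in `C*`. Then `P ⊆ Fᵢ` for some `i`, and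
`(Fᵢ ∪ C*, F₍₃₋ᵢ₎)` is a vertical cover of `M`; moreover if `(F₁, F₂)` is a modular cover of
`M ↾ H` then `(Fᵢ ∪ C*, F₍₃₋ᵢ₎)` is a modular cover of `M`. -/
theorem verticalCover_extend_cocircuit {α : Type*} (M : Matroid α) [M.Finite]
    (H F₁ F₂ : Set α) (hH : M.IsHyperplane H) (hmod : M.IsModularFlat H)
    (hvc : (M ↾ H).VerticalCover F₁ F₂) :
    (M.projUnion H (M.E \ H) ⊆ F₁ ∧ M.VerticalCover (F₁ ∪ (M.E \ H)) F₂ ∧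
      ((M ↾ H).ModularCover F₁ F₂ → M.ModularCover (F₁ ∪ (M.E \ H)) F₂)) ∨
    (M.projUnion H (M.E \ H) ⊆ F₂ ∧ M.VerticalCover (F₂ ∪ (M.E \ H)) F₁ ∧
      ((M ↾ H).ModularCover F₁ F₂ → M.ModularCover (F₂ ∪ (M.E \ H)) F₁)) := by
  obtain ⟨⟨hF₁flat_r, hF₁ne_r⟩, ⟨hF₂flat_r, hF₂ne_r⟩, hun_r⟩ := hvc
  rw [restrict_ground_eq] at hun_r hF₁ne_r hF₂ne_r
  obtain ⟨hF₁flat, hF₁H⟩ := (restrict_flat_iff' hH.1).1 hF₁flat_r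
  obtain ⟨hF₂flat, hF₂H⟩ := (restrict_flat_iff' hH.1).1 hF₂flat_r
  rcases proj_subset_or hH hmod hF₁flat hF₂flat hun_r with hP | hP
  · obtain ⟨hvc', hmc'⟩ := aux_main hH hmod hF₁flat hF₁H hF₁ne_r hF₂flat hF₂H hF₂ne_r
      hun_r hP
    refine Or.inl ⟨hP, hvc', fun hmc => ⟨hvc', ?_, ?_⟩⟩
    · exact (hmc' hmc.2.1 hmc.2.2).1
    · exact (hmc' hmc.2.1 hmc.2.2).2
  · have hun_r' : F₂ ∪ F₁ = H := by rwa [union_comm]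
    obtain ⟨hvc', hmc'⟩ := aux_main hH hmod hF₂flat hF₂H hF₂ne_r hF₁flat hF₁H hF₁ne_r
      hun_r' hP
    refine Or.inr ⟨hP, hvc', fun hmc => ⟨hvc', ?_, ?_⟩⟩
    · exact (hmc' hmc.2.2 hmc.2.1).1
    · exact (hmc' hmc.2.2 hmc.2.1).2
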